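/- arXiv:1909.11411 — 2 statements merged into one kernel-verified Lean document; each statement's English description precedes it below -/
import Mathlib

section
/- Let (X, τ) be a real topological vector space and F : X → [-∞,+∞] be level convex. Then the lower semicontinuous envelope Γ_τ(F) is level convex, and Γ_τ(F) = F^{lslc} pointwise. -/
open Filter Topology

variable {X : Type*}

/-- A function into the extended reals is level convex if along segments its value
is at most the maximum of the values at the endpoints. -/
def LevelConvex [AddCommGroup X] [Module ℝ X] (F : X → EReal) : Prop :=
  ∀ x y : X, ∀ t : ℝ, 0 < t → t < 1 →
    F (t • x + (1 - t) • y) ≤ max (F x) (F y)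

/-- The lower semicontinuous envelope `Γ_τ(F)`: the pointwise supremum of all
lower semicontinuous functions below `F`. -/
noncomputable def lscEnv [TopologicalSpace X] (F : X → EReal) : X → EReal :=
  fun x => ⨆ G : {G : X → EReal // LowerSemicontinuous G ∧ G ≤ F}, (G : X → EReal) x

/-- The level convex envelope `F^{lc}`: the pointwise supremum of all level convex
functions below `F`. -/
noncomputable def lcEnv [AddCommGroup X] [Module ℝ X] (F : X → EReal) : X → EReal :=
  fun x => ⨆ G : {G : X → EReal // LevelConvex G ∧ G ≤ F}, (G : X → EReal) x

/-- The lower semicontinuous level convex envelope `F^{lslc}`: the pointwise supremum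
of all functions below `F` which are both lower semicontinuous and level convex. -/
noncomputable def lslcEnv [TopologicalSpace X] [AddCommGroup X] [Module ℝ X]
    (F : X → EReal) : X → EReal :=
  fun x => ⨆ G : {G : X → EReal // LowerSemicontinuous G ∧ LevelConvex G ∧ G ≤ F},
    (G : X → EReal) x

lemma lscEnv_lsc [TopologicalSpace X] (F : X → EReal) : LowerSemicontinuous (lscEnv F) :=
  lowerSemicontinuous_iSup fun G => G.2.1

lemma lscEnv_le [TopologicalSpace X] (F : X → EReal) : lscEnv F ≤ F :=
  fun x => iSup_le fun G => G.2.2 x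

lemma le_lscEnv [TopologicalSpace X] {F G : X → EReal} (h1 : LowerSemicontinuous G)
    (h2 : G ≤ F) : G ≤ lscEnv F :=
  fun x => le_iSup (fun G : {G : X → EReal // LowerSemicontinuous G ∧ G ≤ F} =>
    (G : X → EReal) x) ⟨G, h1, h2⟩

lemma sublevel_convex [AddCommGroup X] [Module ℝ X] {F : X → EReal} (hF : LevelConvex F)
    (μ : EReal) : Convex ℝ {w | F w ≤ μ} := by
  intro a ha b hb s t hs ht hst
  rcases eq_or_lt_of_le hs with rfl | hs'
  · simp at hst; subst hst; simpa using hb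
  rcases eq_or_lt_of_le ht with rfl | ht'
  · simp at hst; subst hst; simpa using ha
  have h1 : s < 1 := by linarith
  have := hF a b s hs' h1
  have hts : (1 : ℝ) - s = t := by linarith
  rw [hts] at this
  calc F (s • a + t • b) ≤ max (F a) (F b) := this
    _ ≤ μ := max_le ha hb

lemma mem_closure_of_lscEnv_lt [TopologicalSpace X] {F : X → EReal} {x : X} {μ : EReal}
    (h : lscEnv F x < μ) : x ∈ closure {w | F w ≤ μ} := by
  classical
  by_contra hx
  set C := closure {w | F w ≤ μ} with hC
  set G : X → EReal := fun w => if w ∈ C then ⊥ else μ with hG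
  have hGlsc : LowerSemicontinuous G := by
    rw [lowerSemicontinuous_iff_isClosed_preimage]
    intro c
    by_cases hc : μ ≤ c
    · have : G ⁻¹' Set.Iic c = Set.univ := by
        ext w; simp only [Set.mem_preimage, Set.mem_Iic, Set.mem_univ, iff_true, hG]
        split_ifs
        · exact bot_le
        · exact hc
      rw [this]; exact isClosed_univ
    · have : G ⁻¹' Set.Iic c = C := by
        ext w; simp only [Set.mem_preimage, Set.mem_Iic, hG]
        split_ifs with hw
        · simp [hw]
        · simp [hw, hc]
      rw [this]; exact isClosed_closure
  have hGle : G ≤ F := by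
    intro w
    simp only [hG]
    split_ifs with hw
    · exact bot_le
    · have : ¬ F w ≤ μ := fun h' => hw (subset_closure h')
      exact le_of_lt (lt_of_not_ge this)
  have := le_lscEnv hGlsc hGle x
  rw [hG] at this
  simp only [if_neg hx] at this
  exact absurd (this.trans_lt h) (lt_irrefl μ)

lemma lscEnv_levelConvex [TopologicalSpace X] [AddCommGroup X] [Module ℝ X]
    [IsTopologicalAddGroup X] [ContinuousSMul ℝ X] {F : X → EReal} (hF : LevelConvex F) :
    LevelConvex (lscEnv F) := by
  intro x y t ht ht1
  set lam := max (lscEnv F x) (lscEnv F y)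
  apply le_of_forall_gt_imp_ge_of_dense
  intro μ hμ
  have hx : x ∈ closure {w | F w ≤ μ} :=
    mem_closure_of_lscEnv_lt ((le_max_left _ _).trans_lt hμ)
  have hy : y ∈ closure {w | F w ≤ μ} :=
    mem_closure_of_lscEnv_lt ((le_max_right _ _).trans_lt hμ)
  have hconv : Convex ℝ (closure {w | F w ≤ μ}) := (sublevel_convex hF μ).closure
  have hz : t • x + (1 - t) • y ∈ closure {w | F w ≤ μ} :=
    hconv hx hy (le_of_lt ht) (by linarith) (by ring)
  -- closure {F ≤ μ} ⊆ {lscEnv F ≤ μ}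
  have hclosed : IsClosed {w | lscEnv F w ≤ μ} := by
    have := (lscEnv_lsc F).isClosed_preimage μ
    exact this
  have hsub : {w | F w ≤ μ} ⊆ {w | lscEnv F w ≤ μ} :=
    fun w hw => (lscEnv_le F w).trans hw
  exact (hclosed.closure_subset_iff.2 hsub) hz


/-- if `F` is level convex then `Γ_τ(F)` is level convex and
`Γ_τ(F) = F^{lslc}`. -/
theorem stmt1 [TopologicalSpace X] [AddCommGroup X] [Module ℝ X]
    [IsTopologicalAddGroup X] [ContinuousSMul ℝ X] (F : X → EReal)
    (hF : LevelConvex F) :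
    LevelConvex (lscEnv F) ∧ lscEnv F = lslcEnv F := by
  have hlc := lscEnv_levelConvex hF
  refine ⟨hlc, funext fun x => le_antisymm ?_ ?_⟩
  · exact le_iSup (fun G : {G : X → EReal //
      LowerSemicontinuous G ∧ LevelConvex G ∧ G ≤ F} => (G : X → EReal) x)
      ⟨lscEnv F, lscEnv_lsc F, hlc, lscEnv_le F⟩
  · exact iSup_le fun G => le_lscEnv G.2.1 G.2.2.2 x
end

section
/- Let f : ℝ^{d×N} → [-∞,+∞] be lower semicontinuous and coercive (f(ξ) → +∞ as |ξ| → +∞). Then for every λ ∈ ℝ, co(L_λ(f)) = L_λ(f^{lc}). -/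
open Filter Topology

variable {X : Type*}

/-! ### Auxiliary lemmas -/

lemma sum_dite_fin' {M : Type*} [AddCommMonoid M] (n k : ℕ) (hk : k ≤ n) (F : Fin k → M) :
    ∑ j : Fin n, (if h : (j : ℕ) < k then F ⟨j, h⟩ else 0) = ∑ i : Fin k, F i := by
  have h1 : ∑ j : Fin n, (if h : (j : ℕ) < k then F ⟨j, h⟩ else 0)
      = ∑ j ∈ Finset.range n, (if h : j < k then F ⟨j, h⟩ else 0) :=
    Fin.sum_univ_eq_sum_range (fun j => if h : j < k then F ⟨j, h⟩ else 0) n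
  have h2 : ∑ j ∈ Finset.range n, (if h : j < k then F ⟨j, h⟩ else 0)
      = ∑ j ∈ Finset.range k, (if h : j < k then F ⟨j, h⟩ else 0) := by
    symm
    apply Finset.sum_subset (Finset.range_subset_range.2 hk)
    intro j _ hj
    rw [Finset.mem_range] at hj
    rw [dif_neg hj]
  have h3 : ∑ j ∈ Finset.range k, (if h : j < k then F ⟨j, h⟩ else 0)
      = ∑ i : Fin k, (if h : (i : ℕ) < k then F ⟨i, h⟩ else 0) :=
    (Fin.sum_univ_eq_sum_range (fun j => if h : j < k then F ⟨j, h⟩ else 0) k).symm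
  rw [h1, h2, h3]
  apply Finset.sum_congr rfl
  intro i _
  rw [dif_pos i.2]

/-- In a finite dimensional real normed space, the convex hull of a compact set is
compact (via Carathéodory's theorem). -/
lemma isCompact_convexHull_of_isCompact {E : Type*} [NormedAddCommGroup E] [NormedSpace ℝ E]
    [FiniteDimensional ℝ E] {s : Set E} (hs : IsCompact s) : IsCompact (convexHull ℝ s) := by
  rcases s.eq_empty_or_nonempty with rfl | ⟨y₀, hy₀⟩
  · simp
  set n := Module.finrank ℝ E + 1 with hn
  set K : Set ((Fin n → ℝ) × (Fin n → E)) :=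
    (stdSimplex ℝ (Fin n)) ×ˢ (Set.univ.pi fun _ : Fin n => s) with hK
  have hKcomp : IsCompact K := IsCompact.prod (isCompact_stdSimplex (𝕜 := ℝ) (ι := Fin n)) (isCompact_univ_pi fun _ => hs)
  set Φ : (Fin n → ℝ) × (Fin n → E) → E := fun p => ∑ i, p.1 i • p.2 i with hΦdef
  have hΦ : Continuous Φ := by
    apply continuous_finset_sum
    intro i _
    exact ((continuous_apply i).comp continuous_fst).smul
      ((continuous_apply i).comp continuous_snd)
  have himg : convexHull ℝ s = Φ '' K := by
    apply Set.Subset.antisymm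
    · intro x hx
      rw [convexHull_eq_union] at hx
      simp only [Set.mem_iUnion] at hx
      obtain ⟨t, ht₁, ht₂, ht₃⟩ := hx
      have hcard : t.card ≤ n := by
        have := ht₂.card_le_finrank_succ
        rw [Fintype.card_coe] at this
        exact this.trans (Nat.add_le_add_right (Submodule.finrank_le _) 1)
      rw [t.convexHull_eq] at ht₃
      obtain ⟨w, hw₀, hw₁, hwx⟩ := ht₃
      set k := t.card with hk
      set e : {x // x ∈ t} ≃ Fin k := t.equivFin with he
      set w' : Fin n → ℝ := fun j => if h : (j : ℕ) < k then w (e.symm ⟨j, h⟩ : E) else 0 with hw'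
      set z' : Fin n → E := fun j => if h : (j : ℕ) < k then (e.symm ⟨j, h⟩ : E) else y₀ with hz'
      have hsum_w : ∑ j : Fin n, w' j = 1 := by
        have := sum_dite_fin' n k hcard (fun i => w (e.symm i : E))
        rw [hw']
        rw [this]
        rw [Equiv.sum_comp e.symm (fun a : {x // x ∈ t} => w (a : E))]
        rw [Finset.sum_coe_sort t w]
        exact hw₁
      refine ⟨(w', z'), ⟨⟨fun j => ?_, hsum_w⟩, fun j _ => ?_⟩, ?_⟩
      · rw [hw']
        dsimp only
        split_ifs with h
        · exact hw₀ _ (e.symm ⟨j, h⟩).2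
        · exact le_refl 0
      · rw [hz']
        dsimp only
        split_ifs with h
        · exact ht₁ (e.symm ⟨j, h⟩).2
        · exact hy₀
      · rw [hΦdef]
        dsimp only
        have hstep : ∀ j : Fin n, w' j • z' j
            = if h : (j : ℕ) < k then w (e.symm ⟨j, h⟩ : E) • (e.symm ⟨j, h⟩ : E) else 0 := by
          intro j
          rw [hw', hz']
          dsimp only
          split_ifs with h
          · rfl
          · rw [zero_smul]
        rw [Finset.sum_congr rfl (fun j _ => hstep j)]
        rw [sum_dite_fin' n k hcard (fun i => w (e.symm i : E) • (e.symm i : E))]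
        rw [Equiv.sum_comp e.symm (fun a : {x // x ∈ t} => w (a : E) • (a : E))]
        rw [Finset.sum_coe_sort t (fun y => w y • y)]
        rw [← hwx, Finset.centerMass_eq_of_sum_1 _ _ hw₁]
        rfl
    · rintro x ⟨⟨a, b⟩, ⟨⟨ha₀, ha₁⟩, hb⟩, rfl⟩
      apply (convex_convexHull ℝ s).sum_mem (fun i _ => ha₀ i) ha₁
      intro i _
      exact subset_convexHull ℝ s (hb i (Set.mem_univ i))
  rw [himg]
  exact hKcomp.image hΦ

/-- A lower semicontinuous `EReal`-valued function attains its minimum on a nonempty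
compact closed set. -/
lemma lsc_min_attain [TopologicalSpace X] (f : X → EReal) (hf : LowerSemicontinuous f)
    (A : Set X) (hA : IsCompact A) (hAcl : IsClosed A) (hne : A.Nonempty) :
    ∃ y ∈ A, ∀ z ∈ A, f y ≤ f z := by
  set c₀ := sInf (f '' A) with hc₀
  rcases eq_top_or_lt_top c₀ with h | h
  · obtain ⟨y, hy⟩ := hne
    refine ⟨y, hy, fun z hz => ?_⟩
    have : c₀ ≤ f z := sInf_le ⟨z, hz, rfl⟩
    rw [h] at this
    simp [top_le_iff.1 this]
  · have hι : Nonempty {c : EReal // c₀ < c} := ⟨⟨⊤, h⟩⟩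
    set t : {c : EReal // c₀ < c} → Set X := fun c => A ∩ f ⁻¹' Set.Iic c.1 with ht
    have htcl : ∀ c, IsClosed (t c) := fun c =>
      hAcl.inter (hf.isClosed_preimage c.1)
    have htc : ∀ c, IsCompact (t c) := fun c =>
      hA.inter_right (hf.isClosed_preimage c.1)
    have htn : ∀ c, (t c).Nonempty := by
      rintro ⟨c, hc⟩
      rw [hc₀, sInf_lt_iff] at hc
      obtain ⟨b, hb₁, hb₂⟩ := hc
      obtain ⟨z, hz, rfl⟩ := hb₁
      exact ⟨z, hz, le_of_lt hb₂⟩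
    have htd : Directed (· ⊇ ·) t := by
      rintro ⟨c, hc⟩ ⟨c', hc'⟩
      refine ⟨⟨min c c', lt_min hc hc'⟩, ?_, ?_⟩
      · exact Set.inter_subset_inter_right _
          (Set.preimage_mono (Set.Iic_subset_Iic.2 (min_le_left _ _)))
      · exact Set.inter_subset_inter_right _
          (Set.preimage_mono (Set.Iic_subset_Iic.2 (min_le_right _ _)))
    obtain ⟨y, hy⟩ := IsCompact.nonempty_iInter_of_directed_nonempty_isCompact_isClosed
      t htd htn htc htcl
    simp only [Set.mem_iInter] at hy
    have hyA : y ∈ A := (hy ⟨⊤, h⟩).1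
    refine ⟨y, hyA, fun z hz => ?_⟩
    have h1 : f y ≤ c₀ := by
      apply le_of_forall_gt_imp_ge_of_dense
      intro c hc
      exact (hy ⟨c, hc⟩).2
    exact h1.trans (sInf_le ⟨z, hz, rfl⟩)

lemma levelConvex_sublevel [AddCommGroup X] [Module ℝ X] {G : X → EReal}
    (hG : LevelConvex G) (c : EReal) : Convex ℝ {x | G x ≤ c} := by
  intro x hx y hy a b ha hb hab
  rcases eq_or_lt_of_le ha with rfl | ha'
  · simp only [zero_add] at hab; subst hab; simpa using hy
  rcases eq_or_lt_of_le hb with rfl | hb'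
  · simp only [add_zero] at hab; subst hab; simpa using hx
  have hb1 : b = 1 - a := by linarith
  have ha1 : a < 1 := by linarith
  subst hb1
  exact le_trans (hG x y a ha' ha1) (max_le hx hy)

lemma levelConvex_lcEnv [AddCommGroup X] [Module ℝ X] (F : X → EReal) :
    LevelConvex (lcEnv F) := by
  intro x y t ht0 ht1
  apply iSup_le
  intro G
  exact le_trans (G.2.1 x y t ht0 ht1)
    (max_le_max
      (le_iSup (fun G : {G : X → EReal // LevelConvex G ∧ G ≤ F} => (G : X → EReal) x) G)
      (le_iSup (fun G : {G : X → EReal // LevelConvex G ∧ G ≤ F} => (G : X → EReal) y) G))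

lemma lcEnv_le_self [AddCommGroup X] [Module ℝ X] (F : X → EReal) : lcEnv F ≤ F :=
  fun x => iSup_le fun G => G.2.2 x

/-- if `f` is lower semicontinuous and coercive then
`co(L_λ(f)) = L_λ(f^{lc})` for every real `λ`. -/
theorem stmt8 (d N : ℕ) (f : EuclideanSpace ℝ (Fin d × Fin N) → EReal)
    (hlsc : LowerSemicontinuous f)
    (hcoer : ∀ M : ℝ, ∃ R : ℝ, ∀ ξ, R ≤ ‖ξ‖ → (M : EReal) ≤ f ξ) (lam : ℝ) :
    convexHull ℝ {ξ | f ξ ≤ (lam : EReal)} = {ξ | lcEnv f ξ ≤ (lam : EReal)} := by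
  set L : Set (EuclideanSpace ℝ (Fin d × Fin N)) := {ξ | f ξ ≤ (lam : EReal)} with hLdef
  apply Set.Subset.antisymm
  · apply convexHull_min
    · intro x hx
      exact le_trans (lcEnv_le_self f x) hx
    · exact levelConvex_sublevel (levelConvex_lcEnv f) _
  · intro ξ hξ
    by_contra hξC
    -- L is compact
    have hLclosed : IsClosed L := hlsc.isClosed_preimage (lam : EReal)
    obtain ⟨R₁, hR₁⟩ := hcoer (lam + 1)
    have hLbdd : Bornology.IsBounded L := by
      apply (Metric.isBounded_ball (x := (0 : EuclideanSpace ℝ (Fin d × Fin N)))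
        (r := R₁)).subset
      intro y hy
      rw [Metric.mem_ball, dist_zero_right]
      by_contra hcon
      push_neg at hcon
      have h1 := hR₁ y hcon
      have h2 : ((lam : EReal) < ((lam + 1 : ℝ) : EReal)) := by
        exact_mod_cast (by linarith : lam < lam + 1)
      exact absurd (le_trans h1 hy) (not_le.2 h2)
    have hLcomp : IsCompact L := Metric.isCompact_of_isClosed_isBounded hLclosed hLbdd
    have hCcomp : IsCompact (convexHull ℝ L) := isCompact_convexHull_of_isCompact hLcomp
    obtain ⟨ℓ, u, hu1, hu2⟩ := geometric_hahn_banach_closed_point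
      (convex_convexHull ℝ L) hCcomp.isClosed hξC
    set H : Set (EuclideanSpace ℝ (Fin d × Fin N)) := {y | u ≤ ℓ y} with hHdef
    set m := sInf (f '' H) with hm
    set G : EuclideanSpace ℝ (Fin d × Fin N) → EReal :=
      fun y => if u ≤ ℓ y then m else ⊥ with hGdef
    have hGle : G ≤ f := by
      intro y
      by_cases h : u ≤ ℓ y
      · simp only [hGdef, if_pos h]
        exact sInf_le ⟨y, h, rfl⟩
      · simp [hGdef, if_neg h]
    have hGlc : LevelConvex G := by
      intro x y t ht0 ht1
      by_cases h : u ≤ ℓ (t • x + (1 - t) • y)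
      · have hval : ℓ (t • x + (1 - t) • y) = t * ℓ x + (1 - t) * ℓ y := by
          simp [map_add, map_smul, smul_eq_mul]
        have hmax : ℓ (t • x + (1 - t) • y) ≤ max (ℓ x) (ℓ y) := by
          rw [hval]
          have h1 : ℓ x ≤ max (ℓ x) (ℓ y) := le_max_left _ _
          have h2 : ℓ y ≤ max (ℓ x) (ℓ y) := le_max_right _ _
          nlinarith
        have hmx : u ≤ max (ℓ x) (ℓ y) := le_trans h hmax
        rcases le_max_iff.1 hmx with hx | hy
        · simp only [hGdef, if_pos h, if_pos hx]
          exact le_max_left _ _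
        · simp only [hGdef, if_pos h, if_pos hy]
          exact le_max_right _ _
      · simp [hGdef, if_neg h]
    -- m ≤ lam since G is an admissible competitor
    have hmle : m ≤ (lam : EReal) := by
      have h1 : G ξ ≤ lcEnv f ξ :=
        le_iSup (fun G : {G : EuclideanSpace ℝ (Fin d × Fin N) → EReal //
          LevelConvex G ∧ G ≤ f} => (G : EuclideanSpace ℝ (Fin d × Fin N) → EReal) ξ)
          ⟨G, hGlc, hGle⟩
      have h2 : G ξ = m := by simp [hGdef, if_pos (le_of_lt hu2)]
      rw [h2] at h1
      exact le_trans h1 hξ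
    -- but m > lam, contradiction
    have hHclosed : IsClosed H := isClosed_le continuous_const ℓ.continuous
    set A : Set (EuclideanSpace ℝ (Fin d × Fin N)) :=
      H ∩ f ⁻¹' Set.Iic ((lam + 1 : ℝ) : EReal) with hAdef
    obtain ⟨R₂, hR₂⟩ := hcoer (lam + 2)
    have hAbdd : Bornology.IsBounded A := by
      apply (Metric.isBounded_ball (x := (0 : EuclideanSpace ℝ (Fin d × Fin N)))
        (r := R₂)).subset
      rintro y ⟨_, hy2⟩
      rw [Metric.mem_ball, dist_zero_right]
      by_contra hcon
      push_neg at hcon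
      have h1 := hR₂ y hcon
      have h2 : (((lam + 1 : ℝ) : EReal) < ((lam + 2 : ℝ) : EReal)) := by
        exact_mod_cast (by linarith : lam + 1 < lam + 2)
      exact absurd (le_trans h1 hy2) (not_le.2 h2)
    have hAclosed : IsClosed A := hHclosed.inter (hlsc.isClosed_preimage _)
    have hAcomp : IsCompact A := Metric.isCompact_of_isClosed_isBounded hAclosed hAbdd
    have hlam1 : ((lam : EReal) < ((lam + 1 : ℝ) : EReal)) := by
      exact_mod_cast (by linarith : lam < lam + 1)
    have hmgt : (lam : EReal) < m := by
      rcases Set.eq_empty_or_nonempty A with hAe | hAne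
      · have hge : ((lam + 1 : ℝ) : EReal) ≤ m := by
          apply le_sInf
          rintro b ⟨y, hy, rfl⟩
          by_contra hc
          push_neg at hc
          exact Set.eq_empty_iff_forall_notMem.1 hAe y ⟨hy, le_of_lt hc⟩
        exact lt_of_lt_of_le hlam1 hge
      · obtain ⟨y₀, hy₀A, hy₀min⟩ := lsc_min_attain f hlsc A hAcomp hAclosed hAne
        have hy₀H : y₀ ∈ H := hy₀A.1
        have hfy₀ : (lam : EReal) < f y₀ := by
          by_contra hc
          push_neg at hc
          have hmem : y₀ ∈ convexHull ℝ L := subset_convexHull ℝ L hc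
          exact absurd (hu1 y₀ hmem) (not_lt.2 hy₀H)
        have hmin : min (f y₀) ((lam + 1 : ℝ) : EReal) ≤ m := by
          apply le_sInf
          rintro b ⟨y, hy, rfl⟩
          by_cases hle : f y ≤ ((lam + 1 : ℝ) : EReal)
          · exact le_trans (min_le_left _ _) (hy₀min y ⟨hy, hle⟩)
          · exact le_trans (min_le_right _ _) (le_of_lt (not_le.1 hle))
        exact lt_of_lt_of_le (lt_min hfy₀ hlam1) hmin
    exact absurd hmle (not_le.2 hmgt)
end
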